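/- For every state s of A_strong in the set {p_a, p_b, p_c, p'_a, p'_b, p'_c, q_a, q_b, q_c, q'_a, q'_b, q'_c, Y} (the good states of A_strong), let B_s be the Büchi automaton obtained from A_strong by removing the transition (Y,y,I) and adding the significant transition (Y,y,s). Then L(B_s) ≠ L_strong. -/

import Mathlib

/-- A (nondeterministic) Büchi/coBüchi automaton: an initial state, a set of
transitions, and a subset of *significant* transitions. -/
structure BuchiAutomaton (σ : Type) (Q : Type) where
  init : Q
  trans : Set (Q × σ × Q)
  sig : Set (Q × σ × Q)
  sig_sub : sig ⊆ trans

namespace BuchiAutomaton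

variable {σ Q : Type}

/-- `ρ` is a run of `A` on the infinite word `w`, starting at the state `p`. -/
def IsRunFrom (A : BuchiAutomaton σ Q) (p : Q) (w : ℕ → σ) (ρ : ℕ → Q) : Prop :=
  ρ 0 = p ∧ ∀ i, (ρ i, w i, ρ (i + 1)) ∈ A.trans

/-- Büchi acceptance: the run contains infinitely many significant transitions. -/
def BuchiAcc (A : BuchiAutomaton σ Q) (w : ℕ → σ) (ρ : ℕ → Q) : Prop :=
  ∀ N, ∃ i, N ≤ i ∧ (ρ i, w i, ρ (i + 1)) ∈ A.sig

/-- coBüchi acceptance: the run contains finitely many significant transitions. -/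
def CoBuchiAcc (A : BuchiAutomaton σ Q) (w : ℕ → σ) (ρ : ℕ → Q) : Prop :=
  ∃ N, ∀ i, N ≤ i → (ρ i, w i, ρ (i + 1)) ∉ A.sig

/-- The language of `A` (as a Büchi automaton), with initial state `p`. -/
def LangFrom (A : BuchiAutomaton σ Q) (p : Q) : Set (ℕ → σ) :=
  {w | ∃ ρ, A.IsRunFrom p w ρ ∧ A.BuchiAcc w ρ}

/-- The language of `A`, read as a Büchi automaton. -/
def Lang (A : BuchiAutomaton σ Q) : Set (ℕ → σ) :=
  A.LangFrom A.init

/-- The language of `A`, read as a coBüchi automaton. -/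
def CoLang (A : BuchiAutomaton σ Q) : Set (ℕ → σ) :=
  {w | ∃ ρ, A.IsRunFrom A.init w ρ ∧ A.CoBuchiAcc w ρ}

/-- `A` is deterministic: at most one outgoing transition per state and letter. -/
def Deterministic (A : BuchiAutomaton σ Q) : Prop :=
  ∀ p a q q', (p, a, q) ∈ A.trans → (p, a, q') ∈ A.trans → q = q'

/-- `FinRun A l p`: `l` is a finite run of `A` from the initial state, ending in
the state `p` (represented as the chronological list of its transitions). -/
inductive FinRun (A : BuchiAutomaton σ Q) : List (Q × σ × Q) → Q → Prop
  | nil : FinRun A [] A.init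
  | snoc {l : List (Q × σ × Q)} {p : Q} {a : σ} {q : Q} :
      FinRun A l p → (p, a, q) ∈ A.trans → FinRun A (l ++ [(p, a, q)]) q

/-- A resolver for `A`: a function from finite runs and letters to transitions,
such that on every finite run from the initial state ending in a state `p` and
every letter `a`, it outputs a transition on `a` with source `p`. -/
structure Resolver (A : BuchiAutomaton σ Q) where
  res : List (Q × σ × Q) → σ → Q × σ × Q
  res_valid : ∀ l p a, A.FinRun l p →
    (res l a).1 = p ∧ (res l a).2.1 = a ∧ res l a ∈ A.trans

/-- The history (finite run) built by a resolver after reading `n` letters of `w`. -/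
def Resolver.hist {A : BuchiAutomaton σ Q} (r : Resolver A) (w : ℕ → σ) : ℕ → List (Q × σ × Q)
  | 0 => []
  | n + 1 => r.hist w n ++ [r.res (r.hist w n) (w n)]

/-- The run induced by the resolver on `w` satisfies the Büchi condition. -/
def Resolver.InducedBuchiAcc {A : BuchiAutomaton σ Q} (r : Resolver A) (w : ℕ → σ) : Prop :=
  ∀ N, ∃ n, N ≤ n ∧ r.res (r.hist w n) (w n) ∈ A.sig

/-- The run induced by the resolver on `w` satisfies the coBüchi condition. -/
def Resolver.InducedCoBuchiAcc {A : BuchiAutomaton σ Q} (r : Resolver A) (w : ℕ → σ) : Prop :=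
  ∃ N, ∀ n, N ≤ n → r.res (r.hist w n) (w n) ∉ A.sig

/-- `A` is history-deterministic (as a Büchi automaton). -/
def HistoryDeterministic (A : BuchiAutomaton σ Q) : Prop :=
  ∃ r : Resolver A, ∀ w ∈ A.Lang, r.InducedBuchiAcc w

/-- `A` is history-deterministic (as a coBüchi automaton). -/
def CoHistoryDeterministic (A : BuchiAutomaton σ Q) : Prop :=
  ∃ r : Resolver A, ∀ w ∈ A.CoLang, r.InducedCoBuchiAcc w

end BuchiAutomaton

/-- The finite factor `w[m..n)` of the infinite word `w`, as a list. -/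
def wordSegment {σ : Type} (w : ℕ → σ) (m n : ℕ) : List σ :=
  (List.range (n - m)).map fun i => w (m + i)

/-- `omegaPow X`: the infinite words that can be written as an infinite
concatenation of finite words, each belonging to `X`. -/
def omegaPow {σ : Type} (X : Set (List σ)) : Set (ℕ → σ) :=
  {w | ∃ φ : ℕ → ℕ, φ 0 = 0 ∧ StrictMono φ ∧ ∀ k, wordSegment w (φ k) (φ (k + 1)) ∈ X}

/-- The index set `{a, b, c}`. -/
inductive ABC : Type
  | a | b | c
deriving DecidableEq

instance instFintypeABC : Fintype ABC :=
  ⟨{ABC.a, ABC.b, ABC.c}, fun x => by cases x <;> simp⟩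

/-- The alphabet `Σ = {a, b, c, x, y}`. -/
inductive Sig5 : Type
  | la | lb | lc | lx | ly
deriving DecidableEq

instance instFintypeSig5 : Fintype Sig5 :=
  ⟨{Sig5.la, Sig5.lb, Sig5.lc, Sig5.lx, Sig5.ly}, fun x => by cases x <;> simp⟩

/-- The letter associated with an index in `{a, b, c}`. -/
def ABC.tolet : ABC → Sig5
  | .a => .la
  | .b => .lb
  | .c => .lc

/-- Finite words over `{x, y}` (the language `(x^*y^*)^*`). -/
def XYword : Set (List Sig5) := {u | ∀ l ∈ u, l = Sig5.lx ∨ l = Sig5.ly}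

/-- The language `L_α = (x^*y^*)^* x α` of finite words. -/
def Lfin (α : ABC) : Set (List Sig5) :=
  {w | ∃ u ∈ XYword, w = u ++ [Sig5.lx, α.tolet]}

/-- `L_strong = (Σ^* ⋃_{α≠β} L_α L_β L_β Σ^* y)^ω`. -/
def LStrong : Set (ℕ → Sig5) :=
  omegaPow {w | ∃ α β : ABC, α ≠ β ∧ ∃ u v₁ v₂ v₃ z : List Sig5,
    v₁ ∈ Lfin α ∧ v₂ ∈ Lfin β ∧ v₃ ∈ Lfin β ∧
    w = u ++ v₁ ++ v₂ ++ v₃ ++ z ++ [Sig5.ly]}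

/-- The 17 states of the automaton `A_strong`. -/
inductive St17 : Type
  | I
  | io (α : ABC)
  | p (α : ABC)
  | p' (α : ABC)
  | q (α : ABC)
  | q' (α : ABC)
  | Y
deriving DecidableEq

open Sig5 in
/-- The significant transitions of `A_strong`. -/
def strongSig : Set (St17 × Sig5 × St17) :=
  {t | (∃ α : ABC, t = (.io α, α.tolet, .p α)) ∨
       (∃ α β : ABC, α ≠ β ∧ t = (.p' α, β.tolet, .q β)) ∨
       (∃ α : ABC, t = (.q' α, α.tolet, .Y)) ∨
       t = (.Y, ly, .I)}

open Sig5 in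
/-- The non-significant transitions of `A_strong`. -/
def strongNonsig : Set (St17 × Sig5 × St17) :=
  {t | (∃ l ∈ [ly, la, lb, lc], t = (.I, l, .I)) ∨
       (∃ α : ABC, t = (.I, lx, .io α)) ∨
       (∃ α : ABC, t = (.io α, lx, .io α)) ∨
       (∃ α β : ABC, α ≠ β ∧ t = (.io α, β.tolet, .I)) ∨
       (∃ α : ABC, ∃ l ∈ [ly, la, lb, lc], t = (.p α, l, .p α)) ∨
       (∃ α : ABC, t = (.p α, lx, .p' α)) ∨
       (∃ α : ABC, t = (.p' α, lx, .p' α)) ∨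
       (∃ α : ABC, t = (.p' α, α.tolet, .p α)) ∨
       (∃ α : ABC, t = (.p' α, ly, .p α)) ∨
       (∃ α : ABC, ∃ l ∈ [ly, la, lb, lc], t = (.q α, l, .q α)) ∨
       (∃ α : ABC, t = (.q α, lx, .q' α)) ∨
       (∃ α : ABC, t = (.q' α, lx, .q' α)) ∨
       (∃ α : ABC, t = (.q' α, ly, .q α)) ∨
       (∃ α β : ABC, α ≠ β ∧ t = (.q' α, β.tolet, .q β)) ∨
       (∃ l ∈ [lx, la, lb, lc], t = (.Y, l, .Y))}

/-- The Büchi automaton `A_strong`. -/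
def Astrong : BuchiAutomaton Sig5 St17 where
  init := .I
  trans := strongSig ∪ strongNonsig
  sig := strongSig
  sig_sub := Set.subset_union_left

/-- The good states of `A_strong`:
`{p_a, p_b, p_c, p'_a, p'_b, p'_c, q_a, q_b, q_c, q'_a, q'_b, q'_c, Y}`. -/
def strongGood : Set St17 :=
  {s | (∃ α : ABC, s = .p α ∨ s = .p' α ∨ s = .q α ∨ s = .q' α) ∨ s = .Y}

/-- The automaton obtained from `A_strong` by removing the transition `(Y, y, I)`
and adding the significant transition `(Y, y, s)`. -/
def Bstrong (s : St17) : BuchiAutomaton Sig5 St17 where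
  init := .I
  trans := (Astrong.trans \ {(.Y, .ly, .I)}) ∪ {(.Y, .ly, s)}
  sig := (Astrong.sig \ {(.Y, .ly, .I)}) ∪ {(.Y, .ly, s)}
  sig_sub := by
    rintro t (⟨h1, h2⟩ | h)
    · exact Or.inl ⟨Astrong.sig_sub h1, h2⟩
    · exact Or.inr h

set_option synthInstance.maxSize 2000
set_option maxHeartbeats 1000000

namespace Bstrong9

open Sig5 St17

instance (t : St17 × Sig5 × St17) : Decidable (t ∈ strongSig) := by
  unfold strongSig; infer_instance

instance (t : St17 × Sig5 × St17) : Decidable (t ∈ strongNonsig) := by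
  unfold strongNonsig; infer_instance

instance (t : St17 × Sig5 × St17) : Decidable (t ∈ Astrong.trans) := by
  unfold Astrong; exact Set.decidableUnion _ _ _

instance (s : St17) (t : St17 × Sig5 × St17) : Decidable (t ∈ (Bstrong s).trans) := by
  unfold Bstrong
  exact inferInstanceAs (Decidable ((_ ∈ Astrong.trans ∧ ¬(_ = _)) ∨ _ = _))

/-- Prefix word `x a x b x b`, driving `A_strong` from `I` to `Y`. -/
def preW : List Sig5 := [.lx, .la, .lx, .lb, .lx, .lb]

/-- States visited while reading `preW`. -/
def preR : List St17 := [.I, .io .a, .p .a, .p' .a, .q .b, .q' .b]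

/-- The word `preW` followed by the periodic repetition of `per`. -/
def epw (per : List Sig5) (n : ℕ) : Sig5 :=
  if n < 6 then preW.getD n .ly else per.getD ((n - 6) % per.length) .ly

lemma tolet_eq {γ α : ABC}
    (h : γ.tolet = α.tolet ∨ γ.tolet = Sig5.lx ∨ γ.tolet = Sig5.ly) : γ = α := by
  revert h; cases γ <;> cases α <;> decide

lemma not_LStrong (w : ℕ → Sig5) (α : ABC) (N : ℕ)
    (h : ∀ j, N ≤ j → w j = α.tolet ∨ w j = Sig5.lx ∨ w j = Sig5.ly) :
    w ∉ LStrong := by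
  rintro ⟨φ, hφ0, hmono, hX⟩
  obtain ⟨γ, δ, hne, u, v1, v2, v3, z, ⟨u1, hu1, hv1⟩, ⟨u2, hu2, hv2⟩, -, hseg⟩ := hX N
  have hNφ : N ≤ φ N := hmono.le_apply
  have key : ∀ l : Sig5, l ∈ wordSegment w (φ N) (φ (N+1)) →
      l = α.tolet ∨ l = Sig5.lx ∨ l = Sig5.ly := by
    intro l hl
    obtain ⟨i, hi, rfl⟩ := List.mem_map.mp hl
    exact h _ (le_trans hNφ (Nat.le_add_right _ _))
  have h1 : γ = α := tolet_eq (key _ (by rw [hseg, hv1]; simp))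
  have h2 : δ = α := tolet_eq (key _ (by rw [hseg, hv2]; simp))
  exact hne (h1.trans h2.symm)

lemma memB {s : St17} {t : St17 × Sig5 × St17}
    (h : t ∈ Astrong.trans) (h2 : t ≠ (.Y, .ly, .I)) :
    t ∈ (Bstrong s).trans := Or.inl ⟨h, h2⟩

lemma acceptLemma (s : St17) (per : List Sig5) (cyc : List St17)
    (hpos : 0 < per.length)
    (hper0 : per.getD 0 .ly = .ly)
    (hcyc0 : cyc.getD 0 .Y = .Y)
    (hcyc1 : cyc.getD (1 % per.length) .Y = s)
    (htr : ∀ j, j < per.length →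
      (cyc.getD j .Y, per.getD j .ly, cyc.getD ((j + 1) % per.length) .Y)
        ∈ (Bstrong s).trans) :
    epw per ∈ (Bstrong s).Lang := by
  refine ⟨fun n => if n < 6 then preR.getD n .I else cyc.getD ((n - 6) % per.length) .Y,
    ⟨rfl, ?_⟩, ?_⟩
  · intro i
    rcases lt_or_ge i 6 with h6 | h6
    · interval_cases i <;> norm_num [epw, preW, preR]
      · exact memB (by decide) (by decide)
      · exact memB (by decide) (by decide)
      · exact memB (by decide) (by decide)
      · exact memB (by decide) (by decide)
      · exact memB (by decide) (by decide)
      · have h0 : cyc[0]?.getD St17.Y = St17.Y := by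
          rw [← List.getD_eq_getElem?_getD]; exact hcyc0
        rw [h0]; exact memB (by decide) (by decide)
    · have e1 : epw per i = per.getD ((i - 6) % per.length) .ly := by
        simp only [epw]; rw [if_neg (by omega)]
      have e2 : i + 1 - 6 = (i - 6) + 1 := by omega
      simp only [e1]
      rw [if_neg (by omega), if_neg (by omega), e2,
        (Nat.mod_add_mod (i - 6) per.length 1).symm]
      exact htr _ (Nat.mod_lt _ hpos)
  · intro N
    refine ⟨6 + N * per.length, ?_, ?_⟩
    · have := Nat.le_mul_of_pos_right N hpos; omega
    · have e1 : epw per (6 + N * per.length) = Sig5.ly := by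
        simp only [epw]; rw [if_neg (by omega)]
        simpa [Nat.mul_mod_left] using hper0
      have e2 : (6 + N * per.length - 6) % per.length = 0 := by
        simp [Nat.mul_mod_left]
      have e3 : (6 + N * per.length + 1 - 6) % per.length = 1 % per.length := by
        have h : 6 + N * per.length + 1 - 6 = 1 + N * per.length := by omega
        rw [h, Nat.add_mul_mod_self_right]
      beta_reduce
      rw [e1, if_neg (by omega), if_neg (by omega), e2, e3, hcyc0, hcyc1]
      exact Or.inr rfl

lemma main_ne (s : St17) (per : List Sig5) (cyc : List St17) (α : ABC)
    (hpos : 0 < per.length)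
    (hper0 : per.getD 0 .ly = .ly)
    (hcyc0 : cyc.getD 0 .Y = .Y)
    (hcyc1 : cyc.getD (1 % per.length) .Y = s)
    (htr : ∀ j, j < per.length →
      (cyc.getD j .Y, per.getD j .ly, cyc.getD ((j + 1) % per.length) .Y)
        ∈ (Bstrong s).trans)
    (hlet : ∀ l ∈ per, l = α.tolet ∨ l = Sig5.lx ∨ l = Sig5.ly) :
    (Bstrong s).Lang ≠ LStrong := by
  intro heq
  have hin := acceptLemma s per cyc hpos hper0 hcyc0 hcyc1 htr
  rw [heq] at hin
  refine not_LStrong (epw per) α 6 ?_ hin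
  intro j hj
  simp only [epw]
  rw [if_neg (by omega)]
  rcases lt_or_ge ((j - 6) % per.length) per.length with h | h
  · rw [List.getD_eq_getElem _ _ h]
    exact hlet _ (List.getElem_mem _)
  · rw [List.getD_eq_default _ _ h]; right; right; rfl

end Bstrong9

/-- For every good state `s` of `A_strong`, redirecting the
transition `(Y, y, I)` to a significant transition `(Y, y, s)` changes the
language: `L(B_s) ≠ L_strong`. -/
theorem Bstrong_lang_ne_LStrong :
    ∀ s ∈ strongGood, (Bstrong s).Lang ≠ LStrong := by
  rintro s (⟨α, (rfl | rfl | rfl | rfl)⟩ | rfl)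
  · cases α
    · exact Bstrong9.main_ne _ [.ly, .lx, .lb, .lx, .lb] [.Y, .p .a, .p' .a, .q .b, .q' .b] .b
        (by decide) (by decide) (by decide) (by decide) (by decide) (by decide)
    · exact Bstrong9.main_ne _ [.ly, .lx, .lc, .lx, .lc] [.Y, .p .b, .p' .b, .q .c, .q' .c] .c
        (by decide) (by decide) (by decide) (by decide) (by decide) (by decide)
    · exact Bstrong9.main_ne _ [.ly, .lx, .la, .lx, .la] [.Y, .p .c, .p' .c, .q .a, .q' .a] .a
        (by decide) (by decide) (by decide) (by decide) (by decide) (by decide)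
  · cases α
    · exact Bstrong9.main_ne _ [.ly, .lb, .lx, .lb] [.Y, .p' .a, .q .b, .q' .b] .b
        (by decide) (by decide) (by decide) (by decide) (by decide) (by decide)
    · exact Bstrong9.main_ne _ [.ly, .lc, .lx, .lc] [.Y, .p' .b, .q .c, .q' .c] .c
        (by decide) (by decide) (by decide) (by decide) (by decide) (by decide)
    · exact Bstrong9.main_ne _ [.ly, .la, .lx, .la] [.Y, .p' .c, .q .a, .q' .a] .a
        (by decide) (by decide) (by decide) (by decide) (by decide) (by decide)
  · cases α
    · exact Bstrong9.main_ne _ [.ly, .lx, .la] [.Y, .q .a, .q' .a] .a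
        (by decide) (by decide) (by decide) (by decide) (by decide) (by decide)
    · exact Bstrong9.main_ne _ [.ly, .lx, .lb] [.Y, .q .b, .q' .b] .b
        (by decide) (by decide) (by decide) (by decide) (by decide) (by decide)
    · exact Bstrong9.main_ne _ [.ly, .lx, .lc] [.Y, .q .c, .q' .c] .c
        (by decide) (by decide) (by decide) (by decide) (by decide) (by decide)
  · cases α
    · exact Bstrong9.main_ne _ [.ly, .la] [.Y, .q' .a] .a
        (by decide) (by decide) (by decide) (by decide) (by decide) (by decide)
    · exact Bstrong9.main_ne _ [.ly, .lb] [.Y, .q' .b] .b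
        (by decide) (by decide) (by decide) (by decide) (by decide) (by decide)
    · exact Bstrong9.main_ne _ [.ly, .lc] [.Y, .q' .c] .c
        (by decide) (by decide) (by decide) (by decide) (by decide) (by decide)
  · exact Bstrong9.main_ne _ [.ly] [.Y] .a
      (by decide) (by decide) (by decide) (by decide) (by decide) (by decide)
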